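/- If a > 1 and −∞ < b < c < ∞ are real numbers, then the binary relation {(x, y) ∈ ℝ² | y = a^x ∧ b ≤ x ≤ c} (with a^x the real power Real.rpow) is not semialgebraic over ℝ. -/

import Mathlib

/-- A set `s ⊆ ℝ^n` is semialgebraic over `ℝ` if it is a finite union of finite
intersections of sets of the form `{x | p(x) = 0}` and `{x | p(x) > 0}`, where `p`
ranges over polynomials in `n` variables with real coefficients. -/
def IsSemialgebraicReal {n : ℕ} (s : Set (Fin n → ℝ)) : Prop :=
  ∃ (k m : ℕ) (p : Fin k → Fin m → MvPolynomial (Fin n) ℝ) (isEq : Fin k → Fin m → Bool),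
    s = ⋃ i, ⋂ j,
      if isEq i j then {x | MvPolynomial.eval x (p i j) = 0}
      else {x | 0 < MvPolynomial.eval x (p i j)}

open Filter Real

theorem aux_decay (k : ℕ) (d : ℝ) (hd : 0 < d) :
    Tendsto (fun x : ℝ => x ^ k * Real.exp (-(d * x))) atTop (nhds 0) := by
  have h1 : Tendsto (fun x : ℝ => d * x) atTop atTop :=
    Filter.tendsto_id.const_mul_atTop hd
  have h2 := (tendsto_pow_mul_exp_neg_atTop_nhds_zero k).comp h1
  have h3 := h2.const_mul ((1 : ℝ) / d ^ k)
  simp only [Function.comp, mul_zero] at h3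
  refine h3.congr fun x => ?_
  have hdk : d ^ k ≠ 0 := pow_ne_zero _ hd.ne'
  rw [mul_pow]
  field_simp

theorem aux_poly_zero (P : Polynomial ℝ)
    (h : Tendsto (fun x => Polynomial.eval x P) atTop (nhds 0)) : P = 0 := by
  by_contra hP
  rcases lt_or_ge 0 P.degree with hd | hd
  · exact not_tendsto_nhds_of_tendsto_atTop (Polynomial.abs_tendsto_atTop P hd) 0
      (by simpa using h.abs)
  · have hC := Polynomial.eq_C_of_degree_le_zero hd
    have hc : P.coeff 0 = 0 := by
      refine tendsto_nhds_unique (l := atTop (α := ℝ)) ?_ h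
      conv in Polynomial.eval _ _ => rw [hC]
      simpa using tendsto_const_nhds
    exact hP (by rw [hC, hc, map_zero])

theorem aux_mvpoly_zero (t : ℝ) (ht : 0 < t) (q : MvPolynomial (Fin 2) ℝ)
    (h : ∀ x : ℝ, MvPolynomial.eval ![x, Real.exp (t * x)] q = 0) : q = 0 := by
  by_contra hq
  have hsupp : q.support.Nonempty := MvPolynomial.support_nonempty.mpr hq
  set N := q.support.sup (fun m => m 1) with hN
  obtain ⟨m₀, hm₀, hm₀N⟩ := Finset.exists_mem_eq_sup q.support hsupp (fun m => m 1)
  set P : Polynomial ℝ := ∑ m ∈ q.support,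
      if m 1 = N then Polynomial.C (q.coeff m) * Polynomial.X ^ (m 0) else 0 with hP
  have key : ∀ x : ℝ, Polynomial.eval x P
      = - ∑ m ∈ q.support, (if m 1 = N then 0 else
          q.coeff m * x ^ m 0 * Real.exp ((((m 1 : ℝ) - N) * t) * x)) := by
    intro x
    have h0 := h x
    rw [MvPolynomial.eval_eq'] at h0
    have h1 : ∑ m ∈ q.support, q.coeff m * (x ^ m 0 * Real.exp (t * x) ^ m 1) = 0 := by
      simpa [Fin.prod_univ_two] using h0
    have h2 : ∑ m ∈ q.support,
        q.coeff m * (x ^ m 0 * Real.exp (t * x) ^ m 1) * Real.exp (-(N : ℝ) * (t * x)) = 0 := by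
      rw [← Finset.sum_mul, h1, zero_mul]
    have h3 : ∀ m ∈ q.support,
        q.coeff m * (x ^ m 0 * Real.exp (t * x) ^ m 1) * Real.exp (-(N : ℝ) * (t * x))
        = (if m 1 = N then q.coeff m * x ^ m 0 else 0)
          + (if m 1 = N then 0 else
              q.coeff m * x ^ m 0 * Real.exp ((((m 1 : ℝ) - N) * t) * x)) := by
      intro m _
      have hexp : Real.exp (t * x) ^ m 1 * Real.exp (-(N : ℝ) * (t * x))
          = Real.exp ((((m 1 : ℝ) - N) * t) * x) := by
        rw [← Real.exp_nat_mul, ← Real.exp_add]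
        ring_nf
      by_cases hm : m 1 = N
      · rw [hm] at hexp
        simp only [hm, if_true, add_zero]
        rw [mul_assoc (MvPolynomial.coeff m q), mul_assoc (x ^ m 0), hexp]
        simp
      · simp only [hm, if_false, zero_add]
        rw [mul_assoc (MvPolynomial.coeff m q), mul_assoc (x ^ m 0), hexp]
        ring
    rw [Finset.sum_congr rfl h3, Finset.sum_add_distrib] at h2
    have hPe : Polynomial.eval x P
        = ∑ m ∈ q.support, (if m 1 = N then q.coeff m * x ^ m 0 else 0) := by
      rw [hP, Polynomial.eval_finset_sum]
      refine Finset.sum_congr rfl fun m _ => ?_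
      by_cases hm : m 1 = N <;> simp [hm]
    rw [hPe]
    linarith [h2]
  have htend : Tendsto (fun x => Polynomial.eval x P) atTop (nhds 0) := by
    have hsum : Tendsto (fun x : ℝ => ∑ m ∈ q.support, (if m 1 = N then 0 else
        q.coeff m * x ^ m 0 * Real.exp ((((m 1 : ℝ) - N) * t) * x))) atTop (nhds 0) := by
      have := tendsto_finset_sum q.support (f := fun (m : Fin 2 →₀ ℕ) (x : ℝ) =>
        if m 1 = N then 0 else q.coeff m * x ^ m 0 * Real.exp ((((m 1 : ℝ) - N) * t) * x))
        (x := atTop) (a := fun _ => (0:ℝ)) ?_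
      · simpa using this
      · intro m hm
        by_cases hmN : m 1 = N
        · simpa [hmN] using tendsto_const_nhds
        · have hlt : m 1 < N := lt_of_le_of_ne (Finset.le_sup (f := fun m => m 1) hm) hmN
          have hd : 0 < ((N : ℝ) - m 1) * t := by
            apply mul_pos _ ht
            have : (m 1 : ℝ) < N := by exact_mod_cast hlt
            linarith
          have := (aux_decay (m 0) (((N : ℝ) - m 1) * t) hd).const_mul (q.coeff m)
          simp only [mul_zero] at this
          refine (this.congr fun x => ?_)
          simp only [hmN, if_false]
          rw [← mul_assoc]
          congr 1
          congr 1
          push_cast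
          ring
    have := hsum.neg
    simp only [neg_zero] at this
    exact this.congr fun x => (key x).symm
  have hP0 : P = 0 := aux_poly_zero P htend
  have hcoeff : P.coeff (m₀ 0) = q.coeff m₀ := by
    rw [hP, Polynomial.finset_sum_coeff]
    rw [Finset.sum_eq_single m₀]
    · simp [← hm₀N, hN, Polynomial.coeff_C_mul, Polynomial.coeff_X_pow]
    · intro m hm hne
      by_cases hmN : m 1 = N
      · have hne0 : m 0 ≠ m₀ 0 := by
          intro heq
          apply hne
          refine Finsupp.ext fun i => ?_
          fin_cases i
          · exact heq
          · show m 1 = m₀ 1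
            rw [hmN, ← hm₀N]
        simp [hmN, Polynomial.coeff_C_mul, Polynomial.coeff_X_pow, hne0, Ne.symm hne0]
      · simp [hmN]
    · intro hm; exact absurd hm₀ hm
  rw [hP0] at hcoeff
  simp only [Polynomial.coeff_zero] at hcoeff
  exact (MvPolynomial.mem_support_iff.mp hm₀) hcoeff.symm

theorem aux_analytic (t : ℝ) (q : MvPolynomial (Fin 2) ℝ) :
    AnalyticOnNhd ℝ (fun x : ℝ => MvPolynomial.eval ![x, Real.exp (t * x)] q) Set.univ := by
  have hf : ∀ i : Fin 2, AnalyticOnNhd ℝ (fun x : ℝ => ![x, Real.exp (t * x)] i) Set.univ := by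
    intro i
    fin_cases i
    · simpa using analyticOnNhd_id (𝕜 := ℝ) (E := ℝ) (s := Set.univ)
    · have hlin : AnalyticOnNhd ℝ (fun x : ℝ => t * x) Set.univ :=
        analyticOnNhd_const.mul analyticOnNhd_id
      have h' : AnalyticOnNhd ℝ (fun x : ℝ => Real.exp (t * x)) Set.univ :=
        analyticOnNhd_rexp.comp hlin (Set.mapsTo_univ _ _)
      simpa using h'
  have h := AnalyticOnNhd.aeval_mvPolynomial hf q
  have heq : (fun x : ℝ => (MvPolynomial.aeval ![x, Real.exp (t * x)]) q)
      = fun x : ℝ => MvPolynomial.eval ![x, Real.exp (t * x)] q := by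
    funext x
    rw [← MvPolynomial.coe_aeval_eq_eval]
    rfl
  rwa [heq] at h
/-- If `a > 1` and `b < c`, then `{(x, y) ∈ ℝ² | y = a^x ∧ b ≤ x ≤ c}` is not
semialgebraic over `ℝ`. -/
theorem rpow_graph_not_semialgebraic (a b c : ℝ) (ha : 1 < a) (hbc : b < c) :
    ¬ IsSemialgebraicReal
        {v : Fin 2 → ℝ | v 1 = Real.rpow a (v 0) ∧ b ≤ v 0 ∧ v 0 ≤ c} := by
  rintro ⟨k, m, p, isEq, hS⟩
  set t := Real.log a with htdef
  have ht : 0 < t := Real.log_pos ha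
  have ha0 : (0 : ℝ) < a := lt_trans one_pos ha
  have hrpow : ∀ x : ℝ, Real.rpow a x = Real.exp (t * x) := fun x =>
    Real.rpow_def_of_pos ha0 x
  set g : ℝ → (Fin 2 → ℝ) := fun x => ![x, Real.exp (t * x)] with hg
  have hg0 : ∀ x, g x 0 = x := fun x => rfl
  have hg1 : ∀ x, g x 1 = Real.exp (t * x) := fun x => rfl
  have hgmem : ∀ x ∈ Set.Icc b c,
      g x ∈ {v : Fin 2 → ℝ | v 1 = Real.rpow a (v 0) ∧ b ≤ v 0 ∧ v 0 ≤ c} := by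
    intro x hx
    refine ⟨?_, ?_, ?_⟩
    · rw [hg0, hg1, hrpow]
    · rw [hg0]; exact hx.1
    · rw [hg0]; exact hx.2
  set D : Fin k → Set ℝ := fun i => {x | x ∈ Set.Icc b c ∧ g x ∈ ⋂ j,
      (if isEq i j then {v | MvPolynomial.eval v (p i j) = 0}
        else {v | 0 < MvPolynomial.eval v (p i j)})} with hD
  have hcover : Set.Icc b c ⊆ ⋃ i, D i := by
    intro x hx
    have hxS := hgmem x hx
    rw [hS] at hxS
    rcases Set.mem_iUnion.mp hxS with ⟨i, hi⟩
    exact Set.mem_iUnion.mpr ⟨i, hx, hi⟩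
  obtain ⟨i, hDinf⟩ : ∃ i, (D i).Infinite := by
    by_contra hfin
    push_neg at hfin
    exact Set.Icc_infinite hbc ((Set.finite_iUnion hfin).subset hcover)
  by_cases hex : ∃ j, isEq i j = true ∧ p i j ≠ 0
  · obtain ⟨j, hjeq, hjne⟩ := hex
    have hzero : ∀ x ∈ D i, MvPolynomial.eval (g x) (p i j) = 0 := by
      intro x hx
      have hj := Set.mem_iInter.mp hx.2 j
      simp only [hjeq, if_true] at hj
      exact hj
    obtain ⟨x₀, hx₀K, hacc⟩ := hDinf.exists_accPt_of_subset_isCompact isCompact_Icc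
      (fun x hx => hx.1)
    have hfreq : ∃ᶠ y in nhdsWithin x₀ {x₀}ᶜ,
        MvPolynomial.eval (g y) (p i j) = 0 := by
      have h1 := accPt_iff_frequently.mp hacc
      rw [frequently_nhdsWithin_iff]
      exact h1.mono fun y hy => ⟨hzero y hy.2, Set.mem_compl_singleton_iff.mpr hy.1⟩
    have hanalytic : AnalyticOnNhd ℝ (fun x : ℝ => MvPolynomial.eval (g x) (p i j))
        Set.univ := aux_analytic t (p i j)
    have hall : ∀ x : ℝ, MvPolynomial.eval (g x) (p i j) = 0 := fun x =>
      hanalytic.eqOn_zero_of_preconnected_of_frequently_eq_zero isPreconnected_univ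
        (Set.mem_univ x₀) hfreq (Set.mem_univ x)
    exact hjne (aux_mvpoly_zero t ht (p i j) hall)
  · push_neg at hex
    have hopen : IsOpen (⋂ j, (if isEq i j then {v | MvPolynomial.eval v (p i j) = 0}
        else {v : Fin 2 → ℝ | 0 < MvPolynomial.eval v (p i j)})) := by
      refine isOpen_iInter_of_finite fun j => ?_
      by_cases hj : isEq i j = true
      · have hp0 := hex j hj
        have : (if isEq i j then {v | MvPolynomial.eval v (p i j) = 0}
            else {v : Fin 2 → ℝ | 0 < MvPolynomial.eval v (p i j)}) = Set.univ := by
          ext v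
          simp only [hj, if_true, hp0, map_zero, Set.mem_setOf_eq, Set.mem_univ, iff_true]
        rw [this]; exact isOpen_univ
      · have hj' : isEq i j = false := by
          cases h : isEq i j
          · rfl
          · exact absurd h hj
        simp only [hj', Bool.false_eq_true, if_false]
        exact isOpen_lt continuous_const (MvPolynomial.continuous_eval (p i j))
    obtain ⟨x, hx⟩ := hDinf.nonempty
    obtain ⟨ε, hε, hball⟩ := Metric.isOpen_iff.mp hopen (g x) hx.2
    set u' : Fin 2 → ℝ := Function.update (g x) 1 (g x 1 + ε / 2) with hu'
    have hu'0 : u' 0 = g x 0 := Function.update_of_ne (by decide) _ _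
    have hu'1 : u' 1 = g x 1 + ε / 2 := Function.update_self _ _ _
    have hu'ball : u' ∈ Metric.ball (g x) ε := by
      rw [Metric.mem_ball, dist_pi_lt_iff hε]
      intro i2
      fin_cases i2
      · rw [show ((⟨0, by norm_num⟩ : Fin 2) = 0) from rfl, hu'0]
        simpa using hε
      · rw [show ((⟨1, by norm_num⟩ : Fin 2) = 1) from rfl, hu'1, Real.dist_eq]
        rw [add_sub_cancel_left, abs_of_pos (by linarith)]
        linarith
    have hu'S : u' ∈ {v : Fin 2 → ℝ | v 1 = Real.rpow a (v 0) ∧ b ≤ v 0 ∧ v 0 ≤ c} := by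
      rw [hS]
      exact Set.mem_iUnion.mpr ⟨i, hball hu'ball⟩
    have hgxS := hgmem x hx.1
    have h1 : u' 1 = Real.rpow a (u' 0) := hu'S.1
    have h2 : g x 1 = Real.rpow a (g x 0) := hgxS.1
    rw [hu'1, hu'0, ← h2] at h1
    linarith
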